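/- arXiv:2503.17861 — 2 statements merged into one kernel-verified Lean document; each statement's English description precedes it below -/
import Mathlib

section
/- Let C ⊆ K² be a set with at least two points such that Γ*(Γ⁻¹(C)) = C. If C is an arc in K², then Γ⁻¹(C) is an 8-path in ℤ². -/
open TopologicalSpace

/-- Basic (minimal) neighborhoods generating the Khalimsky topology on ℤ. -/
def khN (n : ℤ) : Set ℤ := if Odd n then {n} else {n - 1, n, n + 1}

/-- The Khalimsky (digital) topology on the integers. -/
def khLine : TopologicalSpace ℤ := generateFrom (Set.range khN)

/-- The Khalimsky topology on the digital plane ℤ × ℤ (product topology). -/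
def khPlane : TopologicalSpace (ℤ × ℤ) :=
  @instTopologicalSpaceProd ℤ ℤ khLine khLine

/-- A point of the digital plane is pure if both coordinates have the same parity. -/
def IsPure (p : ℤ × ℤ) : Prop := p.1 % 2 = p.2 % 2

/-- A point of the digital plane is mixed if it is not pure. -/
def IsMixed (p : ℤ × ℤ) : Prop := ¬ IsPure p

/-- A closed (pure) point: both coordinates even. -/
def IsClosedPt (p : ℤ × ℤ) : Prop := Even p.1 ∧ Even p.2

/-- An open (pure) point: both coordinates odd. -/
def IsOpenPt (p : ℤ × ℤ) : Prop := Odd p.1 ∧ Odd p.2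

/-- The minimal open neighborhood N(x) of a point in the digital plane. -/
def minN (x : ℤ × ℤ) : Set (ℤ × ℤ) := ⋂₀ {U : Set (ℤ × ℤ) | khPlane.IsOpen U ∧ x ∈ U}

/-- The closure cl(x) of a singleton in the digital plane. -/
def clPt (x : ℤ × ℤ) : Set (ℤ × ℤ) := @closure (ℤ × ℤ) khPlane {x}

/-- The adjacency set A(x) of a point of the digital plane. -/
def AdjSet (x : ℤ × ℤ) : Set (ℤ × ℤ) :=
  {y | y ≠ x ∧ @IsConnected (ℤ × ℤ) khPlane {x, y}}

/-- An arc: a subset of the digital plane homeomorphic (in the subspace topology)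
to a finite interval of the Khalimsky line. -/
def IsArc (C : Set (ℤ × ℤ)) : Prop :=
  ∃ a b : ℤ,
    Nonempty (@Homeomorph (↥C) (↥(Set.Icc a b))
      (TopologicalSpace.induced Subtype.val khPlane)
      (TopologicalSpace.induced Subtype.val khLine))

/-- z is an endpoint of the arc C: it has exactly one adjacent point within C. -/
def IsEndpointOf (z : ℤ × ℤ) (C : Set (ℤ × ℤ)) : Prop :=
  z ∈ C ∧ (AdjSet z ∩ C).encard = 1

/-- A Jordan curve in the digital plane. -/
def IsJordanCurve (J : Set (ℤ × ℤ)) : Prop :=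
  @IsConnected (ℤ × ℤ) khPlane J ∧ 4 ≤ J.encard ∧ ∀ x ∈ J, IsArc (J \ {x})

/-- The slant embedding Γ(x,y) = (x+y, y−x) of the Rosenfeld plane into the digital plane. -/
def Γmap (p : ℤ × ℤ) : ℤ × ℤ := (p.1 + p.2, p.2 - p.1)

/-- The operator Γ* turning subsets of ℤ² into subsets of the digital plane. -/
def ΓStar (A : Set (ℤ × ℤ)) : Set (ℤ × ℤ) :=
  Γmap '' A ∪
    {x | IsMixed x ∧ (minN x ⊆ Γmap '' A ∪ {x} ∨ clPt x ⊆ Γmap '' A ∪ {x})}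

/-- 8-adjacency in ℤ². -/
def Adj8 (p q : ℤ × ℤ) : Prop := p ≠ q ∧ |p.1 - q.1| ≤ 1 ∧ |p.2 - q.2| ≤ 1

/-- 4-adjacency in ℤ². -/
def Adj4 (p q : ℤ × ℤ) : Prop := p ≠ q ∧ |p.1 - q.1| + |p.2 - q.2| = 1

/-- The 8-neighbours of x within C. -/
def nbrs8 (C : Set (ℤ × ℤ)) (x : ℤ × ℤ) : Set (ℤ × ℤ) := {y ∈ C | Adj8 x y}

/-- The 4-neighbours of x within C. -/
def nbrs4 (C : Set (ℤ × ℤ)) (x : ℤ × ℤ) : Set (ℤ × ℤ) := {y ∈ C | Adj4 x y}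

/-- x is an 8-endpoint of C. -/
def Is8Endpoint (C : Set (ℤ × ℤ)) (x : ℤ × ℤ) : Prop :=
  x ∈ C ∧ (nbrs8 C x).encard = 1

/-- x is a 4-endpoint of C. -/
def Is4Endpoint (C : Set (ℤ × ℤ)) (x : ℤ × ℤ) : Prop :=
  x ∈ C ∧ (nbrs4 C x).encard = 1

/-- An 8-path: a finite set with exactly two 8-endpoints, every other point
having exactly two 8-adjacent points in the set. -/
def Is8Path (C : Set (ℤ × ℤ)) : Prop :=
  C.Finite ∧ {x | Is8Endpoint C x}.encard = 2 ∧
    ∀ x ∈ C, ¬ Is8Endpoint C x → (nbrs8 C x).encard = 2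

/-- A 4-path. -/
def Is4Path (C : Set (ℤ × ℤ)) : Prop :=
  C.Finite ∧ {x | Is4Endpoint C x}.encard = 2 ∧
    ∀ x ∈ C, ¬ Is4Endpoint C x → (nbrs4 C x).encard = 2

/-- A closed 8-curve: every point has exactly two 8-adjacent points in the set. -/
def Is8ClosedCurve (C : Set (ℤ × ℤ)) : Prop :=
  C.Finite ∧ ∀ x ∈ C, (nbrs8 C x).encard = 2

/-- A closed 4-curve. -/
def Is4ClosedCurve (C : Set (ℤ × ℤ)) : Prop :=
  C.Finite ∧ ∀ x ∈ C, (nbrs4 C x).encard = 2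

/-- 8-connectedness: there is no partition into two nonempty pieces that are
not 8-adjacent to each other. -/
def Conn8 (S : Set (ℤ × ℤ)) : Prop :=
  ¬ ∃ A B : Set (ℤ × ℤ), A.Nonempty ∧ B.Nonempty ∧ A ∪ B = S ∧ A ∩ B = ∅ ∧
      ∀ a ∈ A, ∀ b ∈ B, ¬ Adj8 a b

/-- 4-connectedness. -/
def Conn4 (S : Set (ℤ × ℤ)) : Prop :=
  ¬ ∃ A B : Set (ℤ × ℤ), A.Nonempty ∧ B.Nonempty ∧ A ∪ B = S ∧ A ∩ B = ∅ ∧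
      ∀ a ∈ A, ∀ b ∈ B, ¬ Adj4 a b

/-- T is a 4-component of S: a maximal 4-connected subset of S. -/
def Is4CompOf (T S : Set (ℤ × ℤ)) : Prop :=
  T ⊆ S ∧ Conn4 T ∧ ∀ T' : Set (ℤ × ℤ), T ⊆ T' → T' ⊆ S → Conn4 T' → T' = T

/-- U is a connected component of S in the digital plane. -/
def IsCompOf (U S : Set (ℤ × ℤ)) : Prop :=
  ∃ x ∈ S, @connectedComponentIn (ℤ × ℤ) khPlane S x = U

/-- The set S_J of mixed points of Γ*(Γ⁻¹(J)) having exactly three adjacent points in J. -/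
def SJ (J : Set (ℤ × ℤ)) : Set (ℤ × ℤ) :=
  {m | m ∈ ΓStar (Γmap ⁻¹' J) ∧ IsMixed m ∧ (AdjSet m ∩ J).encard = 3}



section KhAux

open Topology

set_option linter.unusedSectionVars false

lemma mem_khN_iff {x y : ℤ} : x ∈ khN y ↔ (x = y ∨ (y % 2 = 0 ∧ (x = y - 1 ∨ x = y + 1))) := by
  unfold khN
  rcases Int.even_or_odd y with hy | hy
  · rw [if_neg (by simpa [Int.not_odd_iff_even] using hy)]
    simp only [Set.mem_insert_iff, Set.mem_singleton_iff]
    have := Int.even_iff.mp hy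
    constructor <;> intro h <;> omega
  · rw [if_pos hy]
    have := Int.odd_iff.mp hy
    simp only [Set.mem_singleton_iff]
    constructor <;> intro h <;> omega

lemma self_mem_khN (n : ℤ) : n ∈ khN n := mem_khN_iff.mpr (Or.inl rfl)

lemma khN_isOpen (n : ℤ) : khLine.IsOpen (khN n) :=
  TopologicalSpace.GenerateOpen.basic _ ⟨n, rfl⟩

lemma khN_min {U : Set ℤ} (hU : khLine.IsOpen U) : ∀ n ∈ U, khN n ⊆ U := by
  induction hU with
  | basic s hs =>
      obtain ⟨m, rfl⟩ := hs
      intro n hn x hx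
      rw [mem_khN_iff] at hn hx ⊢
      rcases Int.even_or_odd m with hm | hm
      · have := Int.even_iff.mp hm; omega
      · have := Int.odd_iff.mp hm; omega
  | univ => intro n _; exact Set.subset_univ _
  | inter s t _ _ ihs iht => intro n hn; exact Set.subset_inter (ihs n hn.1) (iht n hn.2)
  | sUnion S _ ih =>
      rintro n ⟨s, hsS, hns⟩
      exact (ih s hsS n hns).trans (Set.subset_sUnion_of_mem hsS)

lemma spec_khLine {x y : ℤ} : @Specializes ℤ khLine x y ↔ x ∈ khN y := by
  letI := khLine
  rw [specializes_iff_forall_open]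
  constructor
  · intro h; exact h (khN y) (khN_isOpen y) (self_mem_khN y)
  · intro hx s hs hy; exact khN_min hs y hy hx

lemma spec_khPlane {x y : ℤ × ℤ} :
    @Specializes _ khPlane x y ↔ (x.1 ∈ khN y.1 ∧ x.2 ∈ khN y.2) := by
  letI := khLine
  have : @Specializes _ khPlane x y ↔ ((x.1, x.2) ⤳ (y.1, y.2)) := by
    constructor <;> intro h <;> exact h
  rw [this, specializes_prod, spec_khLine, spec_khLine]

lemma mem_minN {x y : ℤ × ℤ} : y ∈ minN x ↔ (y.1 ∈ khN x.1 ∧ y.2 ∈ khN x.2) := by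
  rw [← spec_khPlane]
  letI := khPlane
  rw [specializes_iff_forall_open]
  unfold minN
  simp only [Set.mem_sInter, Set.mem_setOf_eq, and_imp]
  exact ⟨fun h s hs hx => h s hs hx, fun h s hs hx => h s hs hx⟩

lemma mem_clPt {x y : ℤ × ℤ} : y ∈ clPt x ↔ (x.1 ∈ khN y.1 ∧ x.2 ∈ khN y.2) := by
  rw [← spec_khPlane]
  exact (@specializes_iff_mem_closure _ khPlane x y).symm

-- transfer
lemma arc_transfer {C : Set (ℤ × ℤ)} {a b : ℤ}
    (h : @Homeomorph (↥C) (↥(Set.Icc a b))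
      (TopologicalSpace.induced Subtype.val khPlane)
      (TopologicalSpace.induced Subtype.val khLine)) :
    ∃ e : (ℤ × ℤ) → ℤ,
      (∀ x ∈ C, e x ∈ Set.Icc a b) ∧
      (∀ x ∈ C, ∀ y ∈ C, e x = e y → x = y) ∧
      (∀ i ∈ Set.Icc a b, ∃ x ∈ C, e x = i) ∧
      (∀ x ∈ C, ∀ y ∈ C,
        ((@Specializes _ khPlane x y ∨ @Specializes _ khPlane y x) ↔
          (e x ∈ khN (e y) ∨ e y ∈ khN (e x)))) := by
  letI : TopologicalSpace ℤ := khLine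
  letI : TopologicalSpace (ℤ × ℤ) := khPlane
  letI tC : TopologicalSpace ↥C := TopologicalSpace.induced Subtype.val khPlane
  letI tI : TopologicalSpace ↥(Set.Icc a b) := TopologicalSpace.induced Subtype.val khLine
  classical
  refine ⟨fun x => if hx : x ∈ C then (h ⟨x, hx⟩ : ℤ) else a, ?_, ?_, ?_, ?_⟩
  · intro x hx; simp only [dif_pos hx]; exact (h ⟨x, hx⟩).2
  · intro x hx y hy hxy
    simp only [dif_pos hx, dif_pos hy] at hxy
    have : h ⟨x, hx⟩ = h ⟨y, hy⟩ := Subtype.ext hxy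
    have := h.injective this
    exact congrArg Subtype.val this
  · intro i hi
    refine ⟨(h.symm ⟨i, hi⟩ : ℤ × ℤ), (h.symm ⟨i, hi⟩).2, ?_⟩
    simp only [dif_pos (h.symm ⟨i, hi⟩).2]
    have : (⟨(h.symm ⟨i, hi⟩ : ℤ × ℤ), (h.symm ⟨i, hi⟩).2⟩ : ↥C) = h.symm ⟨i, hi⟩ :=
      Subtype.ext rfl
    rw [this, h.apply_symm_apply]
  · intro x hx y hy
    simp only [dif_pos hx, dif_pos hy]
    have hval : @IsInducing _ _ tC khPlane (Subtype.val) := ⟨rfl⟩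
    have hvalI : @IsInducing _ _ tI khLine (Subtype.val) := ⟨rfl⟩
    have t1 : @Specializes _ khPlane x y ↔ @Specializes _ tC ⟨x, hx⟩ ⟨y, hy⟩ :=
      hval.specializes_iff (x := ⟨x, hx⟩) (y := ⟨y, hy⟩)
    have t2 : ∀ u v : ↥C, @Specializes _ tC u v ↔ @Specializes _ tI (h u) (h v) := by
      intro u v
      constructor
      · intro hs; exact hs.map h.continuous
      · intro hs
        have := hs.map h.symm.continuous
        simpa using this
    have t3 : ∀ u v : ↥(Set.Icc a b), @Specializes _ tI u v ↔
        @Specializes _ khLine (u : ℤ) (v : ℤ) := fun u v => (hvalI.specializes_iff (x := u) (y := v)).symm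
    rw [← spec_khLine, ← spec_khLine, ← t3, ← t3, ← t2, ← t2, ← t1,
      ← hval.specializes_iff (x := ⟨y, hy⟩) (y := ⟨x, hx⟩)]

def δmap (x : ℤ × ℤ) : ℤ × ℤ := ((x.1 - x.2) / 2, (x.1 + x.2) / 2)

lemma Γδ {x : ℤ × ℤ} (h : IsPure x) : Γmap (δmap x) = x := by
  unfold IsPure at h
  unfold Γmap δmap
  rw [Prod.ext_iff]
  constructor <;> simp <;> omega

lemma Γmap_inj : Function.Injective Γmap := by
  intro p q h
  unfold Γmap at h
  rw [Prod.ext_iff] at h ⊢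
  simp at h
  omega

lemma pure_Γmap (p : ℤ × ℤ) : IsPure (Γmap p) := by
  unfold IsPure Γmap; simp; omega

lemma mem_image_Γ {C : Set (ℤ × ℤ)} {x : ℤ × ℤ} :
    x ∈ Γmap '' (Γmap ⁻¹' C) ↔ x ∈ C ∧ IsPure x := by
  constructor
  · rintro ⟨p, hp, rfl⟩; exact ⟨hp, pure_Γmap p⟩
  · rintro ⟨hx, hpure⟩
    exact ⟨δmap x, by simp [Set.mem_preimage, Γδ hpure, hx], Γδ hpure⟩

lemma minN_vert {m : ℤ × ℤ} (h1 : m.1 % 2 = 1) (h2 : m.2 % 2 = 0) :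
    minN m = {(m.1, m.2 - 1), m, (m.1, m.2 + 1)} := by
  ext y
  rw [mem_minN, mem_khN_iff, mem_khN_iff]
  simp only [Set.mem_insert_iff, Set.mem_singleton_iff, Prod.ext_iff]
  constructor <;> intro h <;> rcases y with ⟨y1, y2⟩ <;> simp_all <;> omega

lemma minN_horiz {m : ℤ × ℤ} (h1 : m.1 % 2 = 0) (h2 : m.2 % 2 = 1) :
    minN m = {(m.1 - 1, m.2), m, (m.1 + 1, m.2)} := by
  ext y
  rw [mem_minN, mem_khN_iff, mem_khN_iff]
  simp only [Set.mem_insert_iff, Set.mem_singleton_iff, Prod.ext_iff]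
  constructor <;> intro h <;> rcases y with ⟨y1, y2⟩ <;> simp_all <;> omega

lemma clPt_vert {m : ℤ × ℤ} (h1 : m.1 % 2 = 0) (h2 : m.2 % 2 = 1) :
    clPt m = {(m.1, m.2 - 1), m, (m.1, m.2 + 1)} := by
  ext y
  rw [mem_clPt, mem_khN_iff, mem_khN_iff]
  simp only [Set.mem_insert_iff, Set.mem_singleton_iff, Prod.ext_iff]
  constructor <;> intro h <;> rcases y with ⟨y1, y2⟩ <;> simp_all <;> omega

lemma clPt_horiz {m : ℤ × ℤ} (h1 : m.1 % 2 = 1) (h2 : m.2 % 2 = 0) :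
    clPt m = {(m.1 - 1, m.2), m, (m.1 + 1, m.2)} := by
  ext y
  rw [mem_clPt, mem_khN_iff, mem_khN_iff]
  simp only [Set.mem_insert_iff, Set.mem_singleton_iff, Prod.ext_iff]
  constructor <;> intro h <;> rcases y with ⟨y1, y2⟩ <;> simp_all <;> omega

/-- Khalimsky-adjacent-or-equal, arithmetically. -/
def AdjP (x y : ℤ × ℤ) : Prop :=
  (x.1 ∈ khN y.1 ∧ x.2 ∈ khN y.2) ∨ (y.1 ∈ khN x.1 ∧ y.2 ∈ khN x.2)

def DiagPair (P Q : ℤ × ℤ) : Prop :=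
  (P.1 = Q.1 + 1 ∨ Q.1 = P.1 + 1) ∧ (P.2 = Q.2 + 1 ∨ Q.2 = P.2 + 1)
def StraightPair (P Q : ℤ × ℤ) : Prop :=
  (P.1 = Q.1 ∧ (P.2 = Q.2 + 2 ∨ Q.2 = P.2 + 2)) ∨
  (P.2 = Q.2 ∧ (P.1 = Q.1 + 2 ∨ Q.1 = P.1 + 2))

section ctx
variable (C : Set (ℤ × ℤ)) (a b : ℤ) (e : ℤ × ℤ → ℤ)
variable (hmem : ∀ x ∈ C, e x ∈ Set.Icc a b)
variable (hinj : ∀ x ∈ C, ∀ y ∈ C, e x = e y → x = y)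
variable (hsurj : ∀ i ∈ Set.Icc a b, ∃ x ∈ C, e x = i)
variable (hadj : ∀ x ∈ C, ∀ y ∈ C, (AdjP x y ↔ (e x ∈ khN (e y) ∨ e y ∈ khN (e x))))
variable (hfix : ΓStar (Γmap ⁻¹' C) = C)

include hinj hadj in
lemma estep {m P : ℤ × ℤ} (hm : m ∈ C) (hP : P ∈ C) (hne : P ≠ m) (ha : AdjP m P) :
    e P = e m - 1 ∨ e P = e m + 1 := by
  have h1 := (hadj m hm P hP).mp ha
  have h2 : e P ≠ e m := fun h => hne (hinj P hP m hm h)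
  rw [mem_khN_iff, mem_khN_iff] at h1
  omega

include hinj hadj hfix in
lemma mix {m : ℤ × ℤ} (hm : m ∈ C) (hmx : IsMixed m) :
    ∃ P Q, P ∈ C ∧ Q ∈ C ∧ IsPure P ∧ IsPure Q ∧
      e P = e m - 1 ∧ e Q = e m + 1 ∧ StraightPair P Q ∧
      P.1 + P.2 ≠ Q.1 + Q.2 ∧ AdjP m P ∧ AdjP m Q := by
  have hm' : m ∈ ΓStar (Γmap ⁻¹' C) := by rw [hfix]; exact hm
  have hnotim : m ∉ Γmap '' (Γmap ⁻¹' C) := by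
    intro h; exact hmx (mem_image_Γ.mp h).2
  have key : ∃ P Q : ℤ × ℤ, P ∈ Γmap '' (Γmap ⁻¹' C) ∧ Q ∈ Γmap '' (Γmap ⁻¹' C) ∧
      StraightPair P Q ∧ P ≠ m ∧ Q ≠ m ∧ AdjP m P ∧ AdjP m Q ∧ P.1 + P.2 ≠ Q.1 + Q.2 := by
    obtain ⟨m1, m2⟩ := m
    have hpar : (m1 % 2 = 1 ∧ m2 % 2 = 0) ∨ (m1 % 2 = 0 ∧ m2 % 2 = 1) := by
      unfold IsMixed IsPure at hmx; simp at hmx; omega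
    rcases hm' with h | ⟨_, hsub⟩
    · exact absurd h hnotim
    have vert : ({((m1:ℤ), m2 - 1), (m1, m2), (m1, m2 + 1)} : Set (ℤ × ℤ)) ⊆
        Γmap '' (Γmap ⁻¹' C) ∪ {((m1:ℤ), m2)} →
        ∃ P Q : ℤ × ℤ, P ∈ Γmap '' (Γmap ⁻¹' C) ∧ Q ∈ Γmap '' (Γmap ⁻¹' C) ∧
        StraightPair P Q ∧ P ≠ (m1, m2) ∧ Q ≠ (m1, m2) ∧ AdjP (m1, m2) P ∧
        AdjP (m1, m2) Q ∧ P.1 + P.2 ≠ Q.1 + Q.2 := by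
      intro hs
      refine ⟨(m1, m2 - 1), (m1, m2 + 1), ?_, ?_, ?_, ?_, ?_, ?_, ?_, ?_⟩
      · rcases hs (show ((m1:ℤ), m2 - 1) ∈ _ by simp) with h | h
        · exact h
        · exfalso; simp only [Set.mem_singleton_iff, Prod.mk.injEq] at h; omega
      · rcases hs (show ((m1:ℤ), m2 + 1) ∈ _ by simp) with h | h
        · exact h
        · exfalso; simp only [Set.mem_singleton_iff, Prod.mk.injEq] at h; omega
      · simp only [StraightPair, true_and, and_true, true_or, or_true]; omega
      · simp only [Ne, Prod.mk.injEq]; omega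
      · simp only [Ne, Prod.mk.injEq]; omega
      · simp only [AdjP, mem_khN_iff, true_and, and_true, true_or, or_true]; omega
      · simp only [AdjP, mem_khN_iff, true_and, and_true, true_or, or_true]; omega
      · simp only []; omega
    have horiz : ({((m1:ℤ) - 1, m2), (m1, m2), (m1 + 1, m2)} : Set (ℤ × ℤ)) ⊆
        Γmap '' (Γmap ⁻¹' C) ∪ {((m1:ℤ), m2)} →
        ∃ P Q : ℤ × ℤ, P ∈ Γmap '' (Γmap ⁻¹' C) ∧ Q ∈ Γmap '' (Γmap ⁻¹' C) ∧
        StraightPair P Q ∧ P ≠ (m1, m2) ∧ Q ≠ (m1, m2) ∧ AdjP (m1, m2) P ∧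
        AdjP (m1, m2) Q ∧ P.1 + P.2 ≠ Q.1 + Q.2 := by
      intro hs
      refine ⟨(m1 - 1, m2), (m1 + 1, m2), ?_, ?_, ?_, ?_, ?_, ?_, ?_, ?_⟩
      · rcases hs (show ((m1:ℤ) - 1, m2) ∈ _ by simp) with h | h
        · exact h
        · exfalso; simp only [Set.mem_singleton_iff, Prod.mk.injEq] at h; omega
      · rcases hs (show ((m1:ℤ) + 1, m2) ∈ _ by simp) with h | h
        · exact h
        · exfalso; simp only [Set.mem_singleton_iff, Prod.mk.injEq] at h; omega
      · simp only [StraightPair, true_and, and_true, true_or, or_true]; omega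
      · simp only [Ne, Prod.mk.injEq]; omega
      · simp only [Ne, Prod.mk.injEq]; omega
      · simp only [AdjP, mem_khN_iff, true_and, and_true, true_or, or_true]; omega
      · simp only [AdjP, mem_khN_iff, true_and, and_true, true_or, or_true]; omega
      · simp only []; omega
    rcases hpar with ⟨h1, h2⟩ | ⟨h1, h2⟩
    · rcases hsub with hs | hs
      · exact vert (by rw [minN_vert h1 h2] at hs; exact hs)
      · exact horiz (by rw [clPt_horiz h1 h2] at hs; exact hs)
    · rcases hsub with hs | hs
      · exact horiz (by rw [minN_horiz h1 h2] at hs; exact hs)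
      · exact vert (by rw [clPt_vert h1 h2] at hs; exact hs)
  obtain ⟨P, Q, hPi, hQi, hst, hPm, hQm, haP, haQ, hPQ⟩ := key
  obtain ⟨hPC, hPp⟩ := mem_image_Γ.mp hPi
  obtain ⟨hQC, hQp⟩ := mem_image_Γ.mp hQi
  have hP' := estep C e hinj hadj hm hPC hPm haP
  have hQ' := estep C e hinj hadj hm hQC hQm haQ
  have hne : e P ≠ e Q := by
    intro h
    exact (by intro h'; rw [h'] at hPQ; exact hPQ rfl : P ≠ Q) (hinj P hPC Q hQC h)
  rcases hP' with h | h <;> rcases hQ' with h' | h'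
  · omega
  · exact ⟨P, Q, hPC, hQC, hPp, hQp, h, h', hst, hPQ, haP, haQ⟩
  · refine ⟨Q, P, hQC, hPC, hQp, hPp, h', h, ?_, ?_, haQ, haP⟩
    · unfold StraightPair at hst ⊢; omega
    · omega
  · omega

include hinj hadj hfix in
lemma fm {P Q : ℤ × ℤ} (hP : P ∈ C) (hQ : Q ∈ C) (hPp : IsPure P) (hQp : IsPure Q)
    (hs : StraightPair P Q) :
    ∃ m ∈ C, IsMixed m ∧ 2 * e m = e P + e Q ∧ (e P = e Q + 2 ∨ e Q = e P + 2) := by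
  have hPQ : P ≠ Q := by
    unfold StraightPair at hs
    rw [Ne, Prod.ext_iff]
    omega
  have finish : ∀ m : ℤ × ℤ, m ∈ C → IsMixed m → AdjP m P → AdjP m Q →
      (∃ m ∈ C, IsMixed m ∧ 2 * e m = e P + e Q ∧ (e P = e Q + 2 ∨ e Q = e P + 2)) := by
    intro m hmC hmx haP haQ
    have hPm : P ≠ m := fun h => hmx (h ▸ hPp)
    have hQm : Q ≠ m := fun h => hmx (h ▸ hQp)
    have h1 := estep C e hinj hadj hmC hP hPm haP
    have h2 := estep C e hinj hadj hmC hQ hQm haQ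
    have hne : e P ≠ e Q := fun h => hPQ (hinj P hP Q hQ h)
    exact ⟨m, hmC, hmx, by omega, by omega⟩
  have inC : ∀ m : ℤ × ℤ, IsMixed m →
      (minN m ⊆ Γmap '' (Γmap ⁻¹' C) ∪ {m} ∨ clPt m ⊆ Γmap '' (Γmap ⁻¹' C) ∪ {m}) →
      m ∈ C := by
    intro m h1 h2
    rw [← hfix]
    exact Or.inr ⟨h1, h2⟩
  obtain ⟨P1, P2⟩ := P
  obtain ⟨Q1, Q2⟩ := Q
  unfold IsPure at hPp hQp
  dsimp only at hPp hQp
  have hPi : ((P1, P2) : ℤ × ℤ) ∈ Γmap '' (Γmap ⁻¹' C) := mem_image_Γ.mpr ⟨hP, hPp⟩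
  have hQi : ((Q1, Q2) : ℤ × ℤ) ∈ Γmap '' (Γmap ⁻¹' C) := mem_image_Γ.mpr ⟨hQ, hQp⟩
  unfold StraightPair at hs
  dsimp only at hs
  rcases hs with ⟨h1, h2⟩ | ⟨h1, h2⟩
  · -- vertical pair
    set m : ℤ × ℤ := (P1, (P2 + Q2) / 2) with hmdef
    have hmx : IsMixed m := by
      unfold IsMixed IsPure
      rw [hmdef]
      try dsimp only
      omega
    have hsub : ({(m.1, m.2 - 1), m, (m.1, m.2 + 1)} : Set (ℤ × ℤ)) ⊆
        Γmap '' (Γmap ⁻¹' C) ∪ {m} := by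
      intro y hy
      simp only [Set.mem_insert_iff, Set.mem_singleton_iff] at hy
      rcases hy with rfl | rfl | rfl
      · rcases h2 with h2 | h2
        · have : (m.1, m.2 - 1) = ((Q1, Q2) : ℤ × ℤ) := by
            rw [hmdef, Prod.ext_iff]; dsimp only; omega
          rw [this]; exact Or.inl hQi
        · have : (m.1, m.2 - 1) = ((P1, P2) : ℤ × ℤ) := by
            rw [hmdef, Prod.ext_iff]; dsimp only; omega
          rw [this]; exact Or.inl hPi
      · exact Or.inr rfl
      · rcases h2 with h2 | h2
        · have : (m.1, m.2 + 1) = ((P1, P2) : ℤ × ℤ) := by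
            rw [hmdef, Prod.ext_iff]; dsimp only; omega
          rw [this]; exact Or.inl hPi
        · have : (m.1, m.2 + 1) = ((Q1, Q2) : ℤ × ℤ) := by
            rw [hmdef, Prod.ext_iff]; dsimp only; omega
          rw [this]; exact Or.inl hQi
    have hmC : m ∈ C := by
      apply inC m hmx
      have hmx' : m.1 % 2 = 1 ∧ m.2 % 2 = 0 ∨ m.1 % 2 = 0 ∧ m.2 % 2 = 1 := by
        unfold IsMixed IsPure at hmx; omega
      rcases hmx' with ⟨ha1, ha2⟩ | ⟨ha1, ha2⟩
      · left; rw [minN_vert ha1 ha2]; exact hsub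
      · right; rw [clPt_vert ha1 ha2]; exact hsub
    apply finish m hmC hmx
    · simp only [AdjP, mem_khN_iff, hmdef, true_and, and_true, true_or, or_true]
      try dsimp only
      omega
    · simp only [AdjP, mem_khN_iff, hmdef, true_and, and_true, true_or, or_true]
      try dsimp only
      omega
  · -- horizontal pair
    set m : ℤ × ℤ := ((P1 + Q1) / 2, P2) with hmdef
    have hmx : IsMixed m := by
      unfold IsMixed IsPure
      rw [hmdef]
      try dsimp only
      omega
    have hsub : ({(m.1 - 1, m.2), m, (m.1 + 1, m.2)} : Set (ℤ × ℤ)) ⊆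
        Γmap '' (Γmap ⁻¹' C) ∪ {m} := by
      intro y hy
      simp only [Set.mem_insert_iff, Set.mem_singleton_iff] at hy
      rcases hy with rfl | rfl | rfl
      · rcases h2 with h2 | h2
        · have : (m.1 - 1, m.2) = ((Q1, Q2) : ℤ × ℤ) := by
            rw [hmdef, Prod.ext_iff]; dsimp only; omega
          rw [this]; exact Or.inl hQi
        · have : (m.1 - 1, m.2) = ((P1, P2) : ℤ × ℤ) := by
            rw [hmdef, Prod.ext_iff]; dsimp only; omega
          rw [this]; exact Or.inl hPi
      · exact Or.inr rfl
      · rcases h2 with h2 | h2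
        · have : (m.1 + 1, m.2) = ((P1, P2) : ℤ × ℤ) := by
            rw [hmdef, Prod.ext_iff]; dsimp only; omega
          rw [this]; exact Or.inl hPi
        · have : (m.1 + 1, m.2) = ((Q1, Q2) : ℤ × ℤ) := by
            rw [hmdef, Prod.ext_iff]; dsimp only; omega
          rw [this]; exact Or.inl hQi
    have hmC : m ∈ C := by
      apply inC m hmx
      have hmx' : m.1 % 2 = 1 ∧ m.2 % 2 = 0 ∨ m.1 % 2 = 0 ∧ m.2 % 2 = 1 := by
        unfold IsMixed IsPure at hmx; omega
      rcases hmx' with ⟨ha1, ha2⟩ | ⟨ha1, ha2⟩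
      · right; rw [clPt_horiz ha1 ha2]; exact hsub
      · left; rw [minN_horiz ha1 ha2]; exact hsub
    apply finish m hmC hmx
    · simp only [AdjP, mem_khN_iff, hmdef, true_and, and_true, true_or, or_true]
      try dsimp only
      omega
    · simp only [AdjP, mem_khN_iff, hmdef, true_and, and_true, true_or, or_true]
      try dsimp only
      omega

include hinj hadj in
lemma pp {P Q : ℤ × ℤ} (hP : P ∈ C) (hQ : Q ∈ C) (hPp : IsPure P) (hQp : IsPure Q)
    (hne : P ≠ Q) : (e P = e Q + 1 ∨ e Q = e P + 1) ↔ DiagPair P Q := by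
  have hPQ : P.1 ≠ Q.1 ∨ P.2 ≠ Q.2 := by
    by_contra h
    push_neg at h
    exact hne (Prod.ext h.1 h.2)
  unfold IsPure at hPp hQp
  constructor
  · intro h
    have h' : e P ∈ khN (e Q) ∨ e Q ∈ khN (e P) := by
      rw [mem_khN_iff, mem_khN_iff]; omega
    have := (hadj P hP Q hQ).mpr h'
    unfold AdjP at this
    rw [mem_khN_iff, mem_khN_iff, mem_khN_iff, mem_khN_iff] at this
    unfold DiagPair
    omega
  · intro h
    unfold DiagPair at h
    have hA : AdjP P Q := by
      unfold AdjP
      rw [mem_khN_iff, mem_khN_iff, mem_khN_iff, mem_khN_iff]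
      omega
    have h' := (hadj P hP Q hQ).mp hA
    rw [mem_khN_iff, mem_khN_iff] at h'
    have : e P ≠ e Q := fun hh => hne (hinj P hP Q hQ hh)
    omega

include hinj hadj hfix in
lemma adj8_char {p q : ℤ × ℤ} (hp : Γmap p ∈ C) (hq : Γmap q ∈ C) (hne : p ≠ q) :
    Adj8 p q ↔
      ((e (Γmap p) = e (Γmap q) + 1 ∨ e (Γmap q) = e (Γmap p) + 1) ∨
        ((e (Γmap p) = e (Γmap q) + 2 ∨ e (Γmap q) = e (Γmap p) + 2) ∧
          ∃ m ∈ C, IsMixed m ∧ 2 * e m = e (Γmap p) + e (Γmap q))) := by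
  have hxp : IsPure (Γmap p) := pure_Γmap p
  have hyp : IsPure (Γmap q) := pure_Γmap q
  have hxyne : Γmap p ≠ Γmap q := fun h => hne (Γmap_inj h)
  constructor
  · intro h
    have hcase : DiagPair (Γmap p) (Γmap q) ∨ StraightPair (Γmap p) (Γmap q) := by
      obtain ⟨p1, p2⟩ := p
      obtain ⟨q1, q2⟩ := q
      unfold Adj8 at h
      obtain ⟨hne', h1, h2⟩ := h
      rw [abs_le] at h1 h2
      have hne'' : p1 ≠ q1 ∨ p2 ≠ q2 := by
        by_contra hh; push_neg at hh; exact hne' (Prod.ext hh.1 hh.2)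
      unfold DiagPair StraightPair Γmap
      dsimp only at h1 h2 ⊢
      omega
    rcases hcase with hd | hs
    · exact Or.inl ((pp C e hinj hadj hp hq hxp hyp hxyne).mpr hd)
    · obtain ⟨m, hmC, hmx, hmid, hor⟩ := fm C e hinj hadj hfix hp hq hxp hyp hs
      exact Or.inr ⟨by omega, m, hmC, hmx, by omega⟩
  · intro h
    rcases h with h | ⟨h2, m, hmC, hmx, hmid⟩
    · have hd := (pp C e hinj hadj hp hq hxp hyp hxyne).mp h
      obtain ⟨p1, p2⟩ := p
      obtain ⟨q1, q2⟩ := q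
      unfold DiagPair Γmap at hd
      unfold Adj8
      rw [Ne, Prod.ext_iff, abs_le, abs_le]
      dsimp only at hd ⊢
      omega
    · obtain ⟨P, Q, hPC, hQC, hPp', hQp', heP, heQ, hst, _, _, _⟩ :=
        mix C e hinj hadj hfix hmC hmx
      have hxy : (Γmap p = P ∧ Γmap q = Q) ∨ (Γmap p = Q ∧ Γmap q = P) := by
        rcases h2 with h2 | h2
        · exact Or.inr ⟨hinj _ hp _ hQC (by omega), hinj _ hq _ hPC (by omega)⟩
        · exact Or.inl ⟨hinj _ hp _ hPC (by omega), hinj _ hq _ hQC (by omega)⟩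
      have hst' : StraightPair (Γmap p) (Γmap q) := by
        unfold StraightPair at hst ⊢
        rcases hxy with ⟨h3, h4⟩ | ⟨h3, h4⟩ <;> rw [h3, h4] <;> omega
      obtain ⟨p1, p2⟩ := p
      obtain ⟨q1, q2⟩ := q
      unfold StraightPair Γmap at hst'
      unfold Adj8
      rw [Ne, Prod.ext_iff, abs_le, abs_le]
      dsimp only at hst' ⊢
      omega

include hmem hinj hsurj hadj hfix in
lemma side_right {p : ℤ × ℤ} (hp : Γmap p ∈ C) (hia : a ≤ e (Γmap p))
    (hib : e (Γmap p) < b) :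
    ∃ q, q ∈ Γmap ⁻¹' C ∧ Adj8 p q ∧ e (Γmap p) < e (Γmap q) ∧
      ∀ q', q' ∈ Γmap ⁻¹' C → Adj8 p q' → e (Γmap p) < e (Γmap q') → q' = q := by
  obtain ⟨w₁, hw₁C, hw₁e⟩ := hsurj (e (Γmap p) + 1) ⟨by omega, by omega⟩
  by_cases hwp : IsPure w₁
  · have hΓ : Γmap (δmap w₁) = w₁ := Γδ hwp
    have hqA : δmap w₁ ∈ Γmap ⁻¹' C := by simp [Set.mem_preimage, hΓ, hw₁C]
    have hpq : p ≠ δmap w₁ := by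
      intro hh
      rw [hh, hΓ] at hw₁e
      omega
    refine ⟨δmap w₁, hqA, ?_, ?_, ?_⟩
    · exact (adj8_char C e hinj hadj hfix hp (by rw [hΓ]; exact hw₁C) hpq).mpr
        (Or.inl (by rw [hΓ]; omega))
    · rw [hΓ]; omega
    · intro q' hq'A hadj8 hgt
      have hq'C : Γmap q' ∈ C := hq'A
      rcases (adj8_char C e hinj hadj hfix hp hq'C hadj8.1).mp hadj8 with h | ⟨h, m, hmC, hmx, hmid⟩
      · have : Γmap q' = w₁ := hinj _ hq'C _ hw₁C (by omega)
        have : Γmap q' = Γmap (δmap w₁) := by rw [this, hΓ]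
        exact Γmap_inj this
      · have : m = w₁ := hinj _ hmC _ hw₁C (by omega)
        exact absurd hwp (this ▸ hmx)
  · obtain ⟨P, Q, hPC, hQC, hPp, hQp, heP, heQ, hst, _, _, _⟩ :=
      mix C e hinj hadj hfix hw₁C hwp
    have hΓ : Γmap (δmap Q) = Q := Γδ hQp
    have hqA : δmap Q ∈ Γmap ⁻¹' C := by simp [Set.mem_preimage, hΓ, hQC]
    have hpq : p ≠ δmap Q := by
      intro hh
      have : e (Γmap p) = e Q := by rw [hh, hΓ]
      omega
    refine ⟨δmap Q, hqA, ?_, ?_, ?_⟩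
    · refine (adj8_char C e hinj hadj hfix hp (by rw [hΓ]; exact hQC) hpq).mpr
        (Or.inr ⟨by rw [hΓ]; omega, w₁, hw₁C, hwp, by rw [hΓ]; omega⟩)
    · rw [hΓ]; omega
    · intro q' hq'A hadj8 hgt
      have hq'C : Γmap q' ∈ C := hq'A
      rcases (adj8_char C e hinj hadj hfix hp hq'C hadj8.1).mp hadj8 with h | ⟨h, m, hmC, hmx, hmid⟩
      · have h1 : Γmap q' = w₁ := hinj _ hq'C _ hw₁C (by omega)
        exact absurd (h1 ▸ pure_Γmap q') hwp
      · have h1 : Γmap q' = Q := hinj _ hq'C _ hQC (by omega)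
        exact Γmap_inj (by rw [h1, hΓ])

include hmem hinj hsurj hadj hfix in
lemma side_left {p : ℤ × ℤ} (hp : Γmap p ∈ C) (hia : a < e (Γmap p))
    (hib : e (Γmap p) ≤ b) :
    ∃ q, q ∈ Γmap ⁻¹' C ∧ Adj8 p q ∧ e (Γmap q) < e (Γmap p) ∧
      ∀ q', q' ∈ Γmap ⁻¹' C → Adj8 p q' → e (Γmap q') < e (Γmap p) → q' = q := by
  obtain ⟨w₁, hw₁C, hw₁e⟩ := hsurj (e (Γmap p) - 1) ⟨by omega, by omega⟩
  by_cases hwp : IsPure w₁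
  · have hΓ : Γmap (δmap w₁) = w₁ := Γδ hwp
    have hqA : δmap w₁ ∈ Γmap ⁻¹' C := by simp [Set.mem_preimage, hΓ, hw₁C]
    have hpq : p ≠ δmap w₁ := by
      intro hh
      rw [hh, hΓ] at hw₁e
      omega
    refine ⟨δmap w₁, hqA, ?_, ?_, ?_⟩
    · exact (adj8_char C e hinj hadj hfix hp (by rw [hΓ]; exact hw₁C) hpq).mpr
        (Or.inl (by rw [hΓ]; omega))
    · rw [hΓ]; omega
    · intro q' hq'A hadj8 hgt
      have hq'C : Γmap q' ∈ C := hq'A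
      rcases (adj8_char C e hinj hadj hfix hp hq'C hadj8.1).mp hadj8 with h | ⟨h, m, hmC, hmx, hmid⟩
      · have : Γmap q' = w₁ := hinj _ hq'C _ hw₁C (by omega)
        have : Γmap q' = Γmap (δmap w₁) := by rw [this, hΓ]
        exact Γmap_inj this
      · have : m = w₁ := hinj _ hmC _ hw₁C (by omega)
        exact absurd hwp (this ▸ hmx)
  · obtain ⟨P, Q, hPC, hQC, hPp, hQp, heP, heQ, hst, _, _, _⟩ :=
      mix C e hinj hadj hfix hw₁C hwp
    have hΓ : Γmap (δmap P) = P := Γδ hPp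
    have hqA : δmap P ∈ Γmap ⁻¹' C := by simp [Set.mem_preimage, hΓ, hPC]
    have hpq : p ≠ δmap P := by
      intro hh
      have : e (Γmap p) = e P := by rw [hh, hΓ]
      omega
    refine ⟨δmap P, hqA, ?_, ?_, ?_⟩
    · refine (adj8_char C e hinj hadj hfix hp (by rw [hΓ]; exact hPC) hpq).mpr
        (Or.inr ⟨by rw [hΓ]; omega, w₁, hw₁C, hwp, by rw [hΓ]; omega⟩)
    · rw [hΓ]; omega
    · intro q' hq'A hadj8 hgt
      have hq'C : Γmap q' ∈ C := hq'A
      rcases (adj8_char C e hinj hadj hfix hp hq'C hadj8.1).mp hadj8 with h | ⟨h, m, hmC, hmx, hmid⟩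
      · have h1 : Γmap q' = w₁ := hinj _ hq'C _ hw₁C (by omega)
        exact absurd (h1 ▸ pure_Γmap q') hwp
      · have h1 : Γmap q' = P := hinj _ hq'C _ hPC (by omega)
        exact Γmap_inj (by rw [h1, hΓ])

set_option maxHeartbeats 1000000 in
include hmem hinj hsurj hadj hfix in
lemma main_combi (hC2 : 2 ≤ C.encard) : Is8Path (Γmap ⁻¹' C) := by
  have hab : a < b := by
    have h1 : (1 : ℕ∞) < C.encard := lt_of_lt_of_le (by norm_num) hC2
    rw [Set.one_lt_encard_iff] at h1
    obtain ⟨x, y, hx, hy, hxy⟩ := h1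
    have h1 := hmem x hx
    have h2 := hmem y hy
    rw [Set.mem_Icc] at h1 h2
    have : e x ≠ e y := fun h => hxy (hinj x hx y hy h)
    omega
  have hCfin : C.Finite := by
    apply Set.Finite.of_finite_image (f := e)
    · exact (Set.finite_Icc a b).subset (by rintro _ ⟨x, hx, rfl⟩; exact hmem x hx)
    · intro x hx y hy h
      exact hinj x hx y hy h
  have hAfin : (Γmap ⁻¹' C).Finite := hCfin.preimage (Set.injOn_of_injective Γmap_inj)
  obtain ⟨wa, hwaC, hwae⟩ := hsurj a ⟨le_refl a, le_of_lt hab⟩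
  obtain ⟨wb, hwbC, hwbe⟩ := hsurj b ⟨le_of_lt hab, le_refl b⟩
  have hwap : IsPure wa := by
    by_contra hmx
    obtain ⟨P, _, hPC, _, _, _, heP, _, _, _, _, _⟩ := mix C e hinj hadj hfix hwaC hmx
    have := hmem P hPC
    rw [Set.mem_Icc] at this
    omega
  have hwbp : IsPure wb := by
    by_contra hmx
    obtain ⟨_, Q, _, hQC, _, _, _, heQ, _, _, _, _⟩ := mix C e hinj hadj hfix hwbC hmx
    have := hmem Q hQC
    rw [Set.mem_Icc] at this
    omega
  have hΓa : Γmap (δmap wa) = wa := Γδ hwap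
  have hΓb : Γmap (δmap wb) = wb := Γδ hwbp
  have hqaA : δmap wa ∈ Γmap ⁻¹' C := by simp [Set.mem_preimage, hΓa, hwaC]
  have hqbA : δmap wb ∈ Γmap ⁻¹' C := by simp [Set.mem_preimage, hΓb, hwbC]
  have hqaqb : δmap wa ≠ δmap wb := by
    intro h
    have : e (Γmap (δmap wa)) = e (Γmap (δmap wb)) := by rw [h]
    rw [hΓa, hΓb, hwae, hwbe] at this
    omega
  -- memberships of neighbours
  have hmemA : ∀ q, q ∈ Γmap ⁻¹' C → e (Γmap q) ∈ Set.Icc a b :=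
    fun q hq => hmem (Γmap q) hq
  have hneq : ∀ p q : ℤ × ℤ, Adj8 p q → Γmap p ∈ C → Γmap q ∈ C →
      e (Γmap p) ≠ e (Γmap q) := by
    intro p q h hp hq he
    exact h.1 (Γmap_inj (hinj _ hp _ hq he))
  -- count at left end
  have count1a : ∀ p, p ∈ Γmap ⁻¹' C → e (Γmap p) = a →
      (nbrs8 (Γmap ⁻¹' C) p).encard = 1 := by
    intro p hpA hea
    obtain ⟨q, hqA, hq8, hqgt, huniq⟩ :=
      side_right C a b e hmem hinj hsurj hadj hfix hpA (by omega) (by omega)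
    have : nbrs8 (Γmap ⁻¹' C) p = {q} := by
      ext q'
      simp only [nbrs8, Set.mem_setOf_eq, Set.mem_sep_iff, Set.mem_singleton_iff]
      constructor
      · rintro ⟨hq'A, h8⟩
        have h1 := hmemA q' hq'A
        rw [Set.mem_Icc] at h1
        have h2 := hneq p q' h8 hpA hq'A
        exact huniq q' hq'A h8 (by omega)
      · rintro rfl
        exact ⟨hqA, hq8⟩
    rw [this, Set.encard_singleton]
  have count1b : ∀ p, p ∈ Γmap ⁻¹' C → e (Γmap p) = b →
      (nbrs8 (Γmap ⁻¹' C) p).encard = 1 := by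
    intro p hpA heb
    obtain ⟨q, hqA, hq8, hqlt, huniq⟩ :=
      side_left C a b e hmem hinj hsurj hadj hfix hpA (by omega) (by omega)
    have : nbrs8 (Γmap ⁻¹' C) p = {q} := by
      ext q'
      simp only [nbrs8, Set.mem_setOf_eq, Set.mem_sep_iff, Set.mem_singleton_iff]
      constructor
      · rintro ⟨hq'A, h8⟩
        have h1 := hmemA q' hq'A
        rw [Set.mem_Icc] at h1
        have h2 := hneq p q' h8 hpA hq'A
        exact huniq q' hq'A h8 (by omega)
      · rintro rfl
        exact ⟨hqA, hq8⟩
    rw [this, Set.encard_singleton]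
  have count2 : ∀ p, p ∈ Γmap ⁻¹' C → a < e (Γmap p) → e (Γmap p) < b →
      (nbrs8 (Γmap ⁻¹' C) p).encard = 2 := by
    intro p hpA h1 h2
    obtain ⟨q, hqA, hq8, hqgt, huniqR⟩ :=
      side_right C a b e hmem hinj hsurj hadj hfix hpA (by omega) (by omega)
    obtain ⟨r, hrA, hr8, hrlt, huniqL⟩ :=
      side_left C a b e hmem hinj hsurj hadj hfix hpA (by omega) (by omega)
    have : nbrs8 (Γmap ⁻¹' C) p = {r, q} := by
      ext q'
      simp only [nbrs8, Set.mem_setOf_eq, Set.mem_sep_iff, Set.mem_insert_iff,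
        Set.mem_singleton_iff]
      constructor
      · rintro ⟨hq'A, h8⟩
        have hI := hmemA q' hq'A
        rw [Set.mem_Icc] at hI
        have hne := hneq p q' h8 hpA hq'A
        rcases lt_or_gt_of_ne hne.symm with hlt | hgt
        · exact Or.inl (huniqL q' hq'A h8 hlt)
        · exact Or.inr (huniqR q' hq'A h8 hgt)
      · rintro (rfl | rfl)
        · exact ⟨hrA, hr8⟩
        · exact ⟨hqA, hq8⟩
    rw [this]
    exact Set.encard_pair (by intro h; rw [h] at hrlt; omega)
  refine ⟨hAfin, ?_, ?_⟩
  · have hset : {x | Is8Endpoint (Γmap ⁻¹' C) x} = {δmap wa, δmap wb} := by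
      ext x
      simp only [Set.mem_setOf_eq, Set.mem_insert_iff, Set.mem_singleton_iff]
      constructor
      · rintro ⟨hxA, hx1⟩
        have hI := hmemA x hxA
        rw [Set.mem_Icc] at hI
        have : e (Γmap x) = a ∨ e (Γmap x) = b := by
          by_contra h
          push_neg at h
          have := count2 x hxA (by omega) (by omega)
          rw [hx1] at this
          exact absurd this (by norm_num)
        rcases this with h | h
        · left
          apply Γmap_inj
          rw [hΓa]
          exact hinj _ hxA _ hwaC (by omega)
        · right
          apply Γmap_inj
          rw [hΓb]
          exact hinj _ hxA _ hwbC (by omega)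
      · rintro (rfl | rfl)
        · exact ⟨hqaA, count1a _ hqaA (by rw [hΓa, hwae])⟩
        · exact ⟨hqbA, count1b _ hqbA (by rw [hΓb, hwbe])⟩
    rw [hset]
    exact Set.encard_pair hqaqb
  · intro x hxA hnend
    have hI := hmemA x hxA
    rw [Set.mem_Icc] at hI
    have h1 : e (Γmap x) ≠ a := by
      intro h
      exact hnend ⟨hxA, count1a x hxA h⟩
    have h2 : e (Γmap x) ≠ b := by
      intro h
      exact hnend ⟨hxA, count1b x hxA h⟩
    exact count2 x hxA (by omega) (by omega)
end ctx


end KhAux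

/-- Let C ⊆ K² be a set with at least two points such that Γ*(Γ⁻¹(C)) = C.
If C is an arc, then Γ⁻¹(C) is an 8-path in ℤ². -/
theorem preimage_is8Path_of_arc (C : Set (ℤ × ℤ))
    (hcard : 2 ≤ C.encard) (hfix : ΓStar (Γmap ⁻¹' C) = C) (harc : IsArc C) :
    Is8Path (Γmap ⁻¹' C) := by
  obtain ⟨a, b, ⟨h⟩⟩ := harc
  obtain ⟨e, hmem, hinj, hsurj, hadj⟩ := arc_transfer h
  have hadj' : ∀ x ∈ C, ∀ y ∈ C, (AdjP x y ↔ (e x ∈ khN (e y) ∨ e y ∈ khN (e x))) := by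
    intro x hx y hy
    rw [← hadj x hx y hy]
    unfold AdjP
    rw [spec_khPlane, spec_khPlane]
  exact main_combi C a b e hmem hinj hsurj hadj' hfix hcard
end

section
/- Let C ⊆ ℤ² be a closed 8-curve with more than four points, let p ∈ C, and let q ∈ C be 8-adjacent but not 4-adjacent to p, say q = p + (ε, δ) with ε, δ ∈ {−1, 1}. Then the two points p + (ε, 0) and p + (0, δ) lie in different 4-components of ℤ² ∖ C. -/
open TopologicalSpace

/- ### Auxiliary development: crossing-number parity argument -/

namespace ParAux

instance (p q : ℤ × ℤ) : Decidable (Adj8 p q) := by unfold Adj8; infer_instance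

/-- Edges of the curve (given as finset `Cf`) between rows `k` and `k+1`,
whose x-coordinate sum exceeds `t`. -/
def ecr (Cf : Finset (ℤ × ℤ)) (k t : ℤ) : Finset ((ℤ × ℤ) × (ℤ × ℤ)) :=
  (Cf ×ˢ Cf).filter (fun e =>
    e.1.2 = k ∧ e.2.2 = k + 1 ∧ e.1.1 - e.2.1 ≤ 1 ∧ e.2.1 - e.1.1 ≤ 1 ∧ t < e.1.1 + e.2.1)

lemma mem_ecr {Cf : Finset (ℤ × ℤ)} {k t : ℤ} {e : (ℤ × ℤ) × (ℤ × ℤ)} :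
    e ∈ ecr Cf k t ↔ e.1 ∈ Cf ∧ e.2 ∈ Cf ∧ e.1.2 = k ∧ e.2.2 = k + 1 ∧
      e.1.1 - e.2.1 ≤ 1 ∧ e.2.1 - e.1.1 ≤ 1 ∧ t < e.1.1 + e.2.1 := by
  simp [ecr, Finset.mem_filter, Finset.mem_product, and_assoc]

/-- Crossing-number parity of a point. -/
def par (Cf : Finset (ℤ × ℤ)) (z : ℤ × ℤ) : ℕ := (ecr Cf z.2 (2 * z.1)).card % 2

lemma ecr_empty_step (Cf : Finset (ℤ × ℤ)) (k x₀ : ℤ)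
    (h1 : (x₀, k) ∉ Cf) (h2 : (x₀ + 1, k) ∉ Cf) :
    ecr Cf k (2 * x₀) = ecr Cf k (2 * x₀ + 2) := by
  ext ⟨⟨a1, a2⟩, ⟨b1, b2⟩⟩
  simp only [mem_ecr]
  constructor
  · rintro ⟨he1, he2, rfl, rfl, hd1, hd2, ht⟩
    refine ⟨he1, he2, rfl, rfl, hd1, hd2, ?_⟩
    by_contra hle
    have hx : a1 = x₀ ∨ a1 = x₀ + 1 := by omega
    rcases hx with rfl | rfl
    · exact h1 he1
    · exact h2 he1
  · rintro ⟨he1, he2, rfl, rfl, hd1, hd2, ht⟩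
    exact ⟨he1, he2, rfl, rfl, hd1, hd2, by omega⟩

lemma ecr_one_stepA (Cf : Finset (ℤ × ℤ)) (k x₀ : ℤ)
    (hp : (x₀, k) ∈ Cf) (hq : (x₀ + 1, k + 1) ∈ Cf) (ha : (x₀ + 1, k) ∉ Cf) :
    (ecr Cf k (2 * x₀)).card = (ecr Cf k (2 * x₀ + 2)).card + 1 := by
  have key : ecr Cf k (2 * x₀) = insert ((x₀, k), (x₀ + 1, k + 1)) (ecr Cf k (2 * x₀ + 2)) := by
    ext ⟨⟨a1, a2⟩, ⟨b1, b2⟩⟩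
    simp only [mem_ecr, Finset.mem_insert, Prod.mk.injEq]
    constructor
    · rintro ⟨he1, he2, rfl, rfl, hd1, hd2, ht⟩
      by_cases hgt : 2 * x₀ + 2 < a1 + b1
      · exact Or.inr ⟨he1, he2, rfl, rfl, hd1, hd2, hgt⟩
      · have hx : a1 = x₀ ∨ a1 = x₀ + 1 := by omega
        rcases hx with h | h
        · exact Or.inl ⟨⟨h, rfl⟩, by omega, rfl⟩
        · rw [h] at he1; exact absurd he1 ha
    · rintro (⟨⟨h1, h2⟩, h3, h4⟩ | ⟨he1, he2, rfl, rfl, hd1, hd2, ht⟩)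
      · subst h1; subst h2; subst h3; subst h4
        exact ⟨hp, hq, rfl, rfl, by omega, by omega, by omega⟩
      · exact ⟨he1, he2, rfl, rfl, hd1, hd2, by omega⟩
  rw [key, Finset.card_insert_of_notMem]
  simp only [mem_ecr]
  omega

lemma ecr_one_stepB (Cf : Finset (ℤ × ℤ)) (k x₀ : ℤ)
    (hp : (x₀ + 1, k) ∈ Cf) (hq : (x₀, k + 1) ∈ Cf) (hv : (x₀ + 1, k + 1) ∉ Cf) :
    (ecr Cf k (2 * x₀)).card = (ecr Cf k (2 * x₀ + 2)).card + 1 := by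
  have key : ecr Cf k (2 * x₀) = insert ((x₀ + 1, k), (x₀, k + 1)) (ecr Cf k (2 * x₀ + 2)) := by
    ext ⟨⟨a1, a2⟩, ⟨b1, b2⟩⟩
    simp only [mem_ecr, Finset.mem_insert, Prod.mk.injEq]
    constructor
    · rintro ⟨he1, he2, rfl, rfl, hd1, hd2, ht⟩
      by_cases hgt : 2 * x₀ + 2 < a1 + b1
      · exact Or.inr ⟨he1, he2, rfl, rfl, hd1, hd2, hgt⟩
      · have hx : b1 = x₀ ∨ b1 = x₀ + 1 := by omega
        rcases hx with h | h
        · exact Or.inl ⟨⟨by omega, rfl⟩, h, rfl⟩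
        · rw [h] at he2; exact absurd he2 hv
    · rintro (⟨⟨h1, h2⟩, h3, h4⟩ | ⟨he1, he2, rfl, rfl, hd1, hd2, ht⟩)
      · subst h1; subst h2; subst h3; subst h4
        exact ⟨hp, hq, rfl, rfl, by omega, by omega, by omega⟩
      · exact ⟨he1, he2, rfl, rfl, hd1, hd2, by omega⟩
  rw [key, Finset.card_insert_of_notMem]
  simp only [mem_ecr]
  omega


lemma adj8_iff {u v : ℤ × ℤ} :
    Adj8 u v ↔ (u.1 ≠ v.1 ∨ u.2 ≠ v.2) ∧ u.1 - v.1 ≤ 1 ∧ v.1 - u.1 ≤ 1 ∧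
      u.2 - v.2 ≤ 1 ∧ v.2 - u.2 ≤ 1 := by
  unfold Adj8
  rw [abs_le, abs_le]
  constructor
  · rintro ⟨hne, ⟨h1, h2⟩, h3, h4⟩
    refine ⟨?_, by omega, by omega, by omega, by omega⟩
    by_contra h
    push_neg at h
    exact hne (Prod.ext h.1 h.2)
  · rintro ⟨hne, h1, h2, h3, h4⟩
    refine ⟨?_, ⟨by omega, by omega⟩, by omega, by omega⟩
    intro h
    rcases hne with h' | h' <;> exact h' (by rw [h])

lemma lemV (Cf : Finset (ℤ × ℤ)) (k x₀ : ℤ)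
    (hdeg : ∀ v ∈ Cf, (Cf.filter (fun u => Adj8 v u)).card = 2)
    (hmid : (x₀, k + 1) ∉ Cf) :
    (ecr Cf k (2 * x₀)).card % 2 = (ecr Cf (k + 1) (2 * x₀)).card % 2 := by
  classical
  set Vf := Cf.filter (fun v => v.2 = k + 1 ∧ x₀ < v.1) with hVf
  set S := Vf.biUnion
      (fun v => (Cf.filter (fun u => Adj8 v u)).image (fun u => (v, u))) with hSdef
  have memS : ∀ e : (ℤ × ℤ) × (ℤ × ℤ),
      e ∈ S ↔ e.1 ∈ Cf ∧ e.1.2 = k + 1 ∧ x₀ < e.1.1 ∧ e.2 ∈ Cf ∧ Adj8 e.1 e.2 := by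
    intro e
    rw [hSdef]
    simp only [Finset.mem_biUnion, Finset.mem_image, Finset.mem_filter, hVf]
    constructor
    · rintro ⟨v, ⟨hv, hv2, hvx⟩, u, ⟨hu, hadj⟩, rfl⟩
      exact ⟨hv, hv2, hvx, hu, hadj⟩
    · rintro ⟨h1, h2, h3, h4, h5⟩
      exact ⟨e.1, ⟨h1, h2, h3⟩, e.2, ⟨h4, h5⟩, rfl⟩
  -- total count
  have hScard : S.card = 2 * Vf.card := by
    rw [hSdef, Finset.card_biUnion]
    · rw [Finset.sum_congr rfl (g := fun _ => 2) (fun v hv => ?_), Finset.sum_const,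
        smul_eq_mul, mul_comm]
      rw [Finset.card_image_of_injective _ (fun a b h => congrArg Prod.snd h)]
      exact hdeg v (Finset.mem_filter.mp hv).1
    · intro v hv w hw hvw
      rw [Function.onFun, Finset.disjoint_left]
      rintro e he he'
      obtain ⟨u, _, rfl⟩ := Finset.mem_image.mp he
      obtain ⟨u', _, h⟩ := Finset.mem_image.mp he'
      exact hvw (congrArg Prod.fst h).symm
  -- split by the row of the second point
  have hrow : ∀ e ∈ S, e.2.2 = k ∨ e.2.2 = k + 1 ∨ e.2.2 = k + 2 := by
    intro e he
    obtain ⟨_, h2, _, _, hadj⟩ := (memS e).mp he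
    obtain ⟨_, _, _, h4, h5⟩ := adj8_iff.mp hadj
    omega
  have hsplit : S.card = (S.filter (fun e => e.2.2 = k)).card
      + (S.filter (fun e => e.2.2 = k + 1)).card
      + (S.filter (fun e => e.2.2 = k + 2)).card := by
    have e1 := Finset.card_filter_add_card_filter_not (s := S) (p := fun e => e.2.2 = k)
    have e2 := Finset.card_filter_add_card_filter_not
      (s := S.filter (fun e => ¬ e.2.2 = k)) (p := fun e => e.2.2 = k + 1)
    have e3 : (S.filter (fun e => ¬ e.2.2 = k)).filter (fun e => e.2.2 = k + 1)
        = S.filter (fun e => e.2.2 = k + 1) := by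
      rw [Finset.filter_filter]
      apply Finset.filter_congr
      intro e he
      constructor
      · rintro ⟨h1, h2⟩; exact h2
      · intro h; exact ⟨by omega, h⟩
    have e4 : (S.filter (fun e => ¬ e.2.2 = k)).filter (fun e => ¬ e.2.2 = k + 1)
        = S.filter (fun e => e.2.2 = k + 2) := by
      rw [Finset.filter_filter]
      apply Finset.filter_congr
      intro e he
      have := hrow e he
      constructor
      · rintro ⟨h1, h2⟩; omega
      · intro h; omega
    rw [e3, e4] at e2
    omega
  -- down edges
  have hdown : (S.filter (fun e => e.2.2 = k)).card = (ecr Cf k (2 * x₀)).card := by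
    rw [← Finset.card_image_of_injective (ecr Cf k (2 * x₀)) Prod.swap_injective]
    congr 1
    ext ⟨⟨a1, a2⟩, ⟨b1, b2⟩⟩
    simp only [Finset.mem_filter, memS, Finset.mem_image, mem_ecr, adj8_iff, Prod.swap,
      Prod.mk.injEq, Prod.exists]
    constructor
    · rintro ⟨⟨h1, h2, h3, h4, h5, h6, h7, h8, h9⟩, h10⟩
      exact ⟨b1, b2, a1, a2, ⟨h4, h1, h10, h2, by omega, by omega, by omega⟩, ⟨rfl, rfl⟩, ⟨rfl, rfl⟩⟩
    · rintro ⟨c1, c2, d1, d2, ⟨h1, h2, h3, h4, h5, h6, h7⟩, ⟨rfl, rfl⟩, ⟨rfl, rfl⟩⟩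
      have hax : x₀ < d1 := by
        rcases lt_or_ge x₀ d1 with h | h
        · exact h
        · have hdx : d1 = x₀ := by omega
          rw [hdx, h4] at h2
          exact absurd h2 hmid
      exact ⟨⟨h2, h4, hax, h1, ⟨by omega, by omega, by omega, by omega, by omega⟩⟩, h3⟩
  -- up edges
  have hup : (S.filter (fun e => e.2.2 = k + 2)).card = (ecr Cf (k + 1) (2 * x₀)).card := by
    congr 1
    ext ⟨⟨a1, a2⟩, ⟨b1, b2⟩⟩
    simp only [Finset.mem_filter, memS, mem_ecr, adj8_iff]
    constructor
    · rintro ⟨⟨h1, h2, h3, h4, h5⟩, h6⟩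
      obtain ⟨_, d1, d2, d3, d4⟩ := h5
      exact ⟨h1, h4, h2, by omega, by omega, by omega, by omega⟩
    · rintro ⟨h1, h2, h3, h4, h5, h6, h7⟩
      have hax : x₀ < a1 := by
        rcases lt_or_ge x₀ a1 with h | h
        · exact h
        · have : a1 = x₀ := by omega
          subst this
          rw [h3] at h1
          exact absurd h1 hmid
      exact ⟨⟨h1, h3, hax, h2, ⟨by omega, by omega, by omega, by omega, by omega⟩⟩, by omega⟩
  -- horizontal edges : even count
  have hhor : (S.filter (fun e => e.2.2 = k + 1)).card % 2 = 0 := by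
    set S2 := S.filter (fun e => e.2.2 = k + 1) with hS2
    have memS2 : ∀ e : (ℤ × ℤ) × (ℤ × ℤ), e ∈ S2 ↔
        (e.1 ∈ Cf ∧ e.1.2 = k + 1 ∧ x₀ < e.1.1 ∧ e.2 ∈ Cf ∧ Adj8 e.1 e.2) ∧ e.2.2 = k + 1 := by
      intro e; rw [hS2, Finset.mem_filter, memS]
    have hswap : ∀ e ∈ S2, Prod.swap e ∈ S2 := by
      rintro ⟨⟨a1, a2⟩, ⟨b1, b2⟩⟩ he
      rw [memS2] at he ⊢
      obtain ⟨⟨h1, h2, h3, h4, h5⟩, h6⟩ := he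
      obtain ⟨hne, d1, d2, d3, d4⟩ := adj8_iff.mp h5
      simp only [Prod.swap] at *
      have hbx : x₀ < b1 := by
        rcases lt_or_ge x₀ b1 with h | h
        · exact h
        · have : b1 = x₀ := by omega
          subst this
          rw [h6] at h4
          exact absurd h4 hmid
      refine ⟨⟨h4, h6, hbx, h1, adj8_iff.mpr ⟨?_, by omega, by omega, by omega, by omega⟩⟩, h2⟩
      omega
    set P : (ℤ × ℤ) × (ℤ × ℤ) → Prop :=
      fun e => e.1.1 < e.2.1 ∨ (e.1.1 = e.2.1 ∧ e.1.2 < e.2.2) with hP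
    have hPdec : ∀ e, Decidable (P e) := fun e => by rw [hP]; infer_instance
    have hcards : (S2.filter P).card = (S2.filter (fun e => ¬ P e)).card := by
      apply Finset.card_bij (i := fun e _ => Prod.swap e)
      · intro e he
        rw [Finset.mem_filter] at he ⊢
        obtain ⟨he, hpe⟩ := he
        refine ⟨hswap e he, ?_⟩
        rw [hP] at hpe ⊢
        simp only [Prod.fst_swap, Prod.snd_swap]
        omega
      · intro e₁ h₁ e₂ h₂ h
        exact Prod.swap_injective h
      · intro d hd
        rw [Finset.mem_filter] at hd
        obtain ⟨hd1, hd2⟩ := hd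
        refine ⟨Prod.swap d, Finset.mem_filter.mpr ⟨hswap d hd1, ?_⟩, Prod.swap_swap d⟩
        obtain ⟨⟨_, _, _, _, hadj⟩, _⟩ := (memS2 d).mp hd1
        obtain ⟨hne, _, _, _, _⟩ := adj8_iff.mp hadj
        rw [hP] at hd2 ⊢
        simp only [Prod.fst_swap, Prod.snd_swap]
        omega
    have : S2.card = (S2.filter P).card + (S2.filter (fun e => ¬ P e)).card := by
      exact (Finset.card_filter_add_card_filter_not (p := P)).symm
    omega
  omega


lemma parStep (Cf : Finset (ℤ × ℤ))
    (hdeg : ∀ v ∈ Cf, (Cf.filter (fun u => Adj8 v u)).card = 2)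
    (z w : ℤ × ℤ) (hz : z ∉ Cf) (hw : w ∉ Cf) (hadj : Adj4 z w) :
    par Cf z = par Cf w := by
  obtain ⟨z1, z2⟩ := z
  obtain ⟨w1, w2⟩ := w
  obtain ⟨hne, hsum⟩ := hadj
  simp only at hsum
  have hcases : (w1 = z1 + 1 ∧ w2 = z2) ∨ (w1 = z1 - 1 ∧ w2 = z2) ∨
      (w1 = z1 ∧ w2 = z2 + 1) ∨ (w1 = z1 ∧ w2 = z2 - 1) := by
    rcases abs_cases (z1 - w1) with ⟨h1, _⟩ | ⟨h1, _⟩ <;>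
      rcases abs_cases (z2 - w2) with ⟨h2, _⟩ | ⟨h2, _⟩ <;>
      rw [h1, h2] at hsum <;> omega
  simp only [par]
  rcases hcases with ⟨h1, h2⟩ | ⟨h1, h2⟩ | ⟨h1, h2⟩ | ⟨h1, h2⟩ <;>
    (have hw' : (w1, w2) ∉ Cf := hw) <;> rw [h1, h2] at hw' <;> rw [h1, h2]
  · rw [show 2 * (z1 + 1) = 2 * z1 + 2 by ring, ecr_empty_step Cf z2 z1 hz hw']
  · rw [show 2 * z1 = 2 * (z1 - 1) + 2 by ring, ecr_empty_step Cf z2 (z1 - 1) hw'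
      (by rw [show z1 - 1 + 1 = z1 by ring]; exact hz)]
  · exact lemV Cf z2 z1 hdeg hw'
  · have := lemV Cf (z2 - 1) z1 hdeg (by rw [show z2 - 1 + 1 = z2 by ring]; exact hz)
    rw [show z2 - 1 + 1 = z2 by ring] at this
    exact this.symm

lemma parCore (Cf : Finset (ℤ × ℤ))
    (hdeg : ∀ v ∈ Cf, (Cf.filter (fun u => Adj8 v u)).card = 2)
    (p1 p2 ε δ : ℤ) (hε : ε = -1 ∨ ε = 1) (hδ : δ = -1 ∨ δ = 1)
    (hp : (p1, p2) ∈ Cf) (hq : (p1 + ε, p2 + δ) ∈ Cf)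
    (ha : (p1 + ε, p2) ∉ Cf) (hb : (p1, p2 + δ) ∉ Cf) :
    par Cf (p1 + ε, p2) ≠ par Cf (p1, p2 + δ) := by
  simp only [par]
  rcases hε with rfl | rfl <;> rcases hδ with rfl | rfl
  · -- ε = -1, δ = -1 : edge (q,p), row p2-1, x₀ = p1-1, lemTone A
    rw [show p2 + (-1) = p2 - 1 by ring] at *
    rw [show p1 + (-1) = p1 - 1 by ring] at *
    have hV := lemV Cf (p2 - 1) (p1 - 1) hdeg
      (by rw [show p2 - 1 + 1 = p2 by ring]; exact ha)
    rw [show p2 - 1 + 1 = p2 by ring] at hV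
    have hT := ecr_one_stepA Cf (p2 - 1) (p1 - 1) hq
      (by rw [show p1 - 1 + 1 = p1 by ring, show p2 - 1 + 1 = p2 by ring]; exact hp)
      (by rw [show p1 - 1 + 1 = p1 by ring]; exact hb)
    rw [show 2 * (p1 - 1) + 2 = 2 * p1 by ring] at hT
    omega
  · -- ε = -1, δ = 1 : lemTone B at row p2, x₀ = p1 - 1
    rw [show p1 + (-1) = p1 - 1 by ring] at *
    have hV := lemV Cf p2 p1 hdeg hb
    have hT := ecr_one_stepB Cf p2 (p1 - 1)
      (by rw [show p1 - 1 + 1 = p1 by ring]; exact hp) hq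
      (by rw [show p1 - 1 + 1 = p1 by ring]; exact hb)
    rw [show 2 * (p1 - 1) + 2 = 2 * p1 by ring] at hT
    omega
  · -- ε = 1, δ = -1 : lemTone B at row p2 - 1, x₀ = p1
    rw [show p2 + (-1) = p2 - 1 by ring] at *
    have hV := lemV Cf (p2 - 1) (p1 + 1) hdeg
      (by rw [show p2 - 1 + 1 = p2 by ring]; exact ha)
    rw [show p2 - 1 + 1 = p2 by ring] at hV
    have hT := ecr_one_stepB Cf (p2 - 1) p1 hq
      (by rw [show p2 - 1 + 1 = p2 by ring]; exact hp)
      (by rw [show p2 - 1 + 1 = p2 by ring]; exact ha)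
    rw [show 2 * (p1 + 1) = 2 * p1 + 2 by ring] at hV ⊢
    omega
  · -- ε = 1, δ = 1 : lemTone A at row p2, x₀ = p1
    have hV := lemV Cf p2 p1 hdeg hb
    have hT := ecr_one_stepA Cf p2 p1 hp hq ha
    rw [show 2 * (p1 + 1) = 2 * p1 + 2 by ring]
    omega

end ParAux

/-- For a closed 8-curve C with more than four points, p ∈ C, and q = p + (ε, δ) ∈ C
8-adjacent but not 4-adjacent to p (ε, δ ∈ {−1,1}), the points p + (ε, 0) and
p + (0, δ) lie in different 4-components of ℤ² ∖ C. -/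
theorem diagonal_neighbours_in_different_4components (C : Set (ℤ × ℤ))
    (p : ℤ × ℤ) (ε δ : ℤ) (hC : Is8ClosedCurve C) (hcard : 4 < C.encard)
    (hp : p ∈ C) (hε : ε = -1 ∨ ε = 1) (hδ : δ = -1 ∨ δ = 1)
    (hq : (p.1 + ε, p.2 + δ) ∈ C) :
    ∀ T₁ T₂ : Set (ℤ × ℤ), Is4CompOf T₁ Cᶜ → Is4CompOf T₂ Cᶜ →
      (p.1 + ε, p.2) ∈ T₁ → (p.1, p.2 + δ) ∈ T₂ → T₁ ≠ T₂ := by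
  classical
  intro T₁ T₂ h₁ h₂ haT hbT heq
  obtain ⟨hfin, hnb⟩ := hC
  set Cf : Finset (ℤ × ℤ) := hfin.toFinset with hCf
  have hmem : ∀ x, x ∈ Cf ↔ x ∈ C := fun x => hfin.mem_toFinset
  have hdeg : ∀ v ∈ Cf, (Cf.filter (fun u => Adj8 v u)).card = 2 := by
    intro v hv
    have h2 := hnb v ((hmem v).mp hv)
    have hset : nbrs8 C v = ↑(Cf.filter (fun u => Adj8 v u)) := by
      ext y
      simp only [nbrs8, Set.mem_setOf_eq, Finset.coe_filter, hmem]
    rw [hset, Set.encard_coe_eq_coe_finsetCard] at h2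
    exact_mod_cast h2
  -- notation
  set a : ℤ × ℤ := (p.1 + ε, p.2) with hadef
  set b : ℤ × ℤ := (p.1, p.2 + δ) with hbdef
  have hbT₁ : b ∈ T₁ := heq ▸ hbT
  have hsub : T₁ ⊆ Cᶜ := h₁.1
  have haC : a ∉ Cf := fun h => (hsub haT) ((hmem a).mp h)
  have hbC : b ∉ Cf := fun h => (hsub hbT₁) ((hmem b).mp h)
  have hne : ParAux.par Cf a ≠ ParAux.par Cf b :=
    ParAux.parCore Cf hdeg p.1 p.2 ε δ hε hδ
      ((hmem (p.1, p.2)).mpr hp) ((hmem _).mpr hq) haC hbC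
  -- 4-connected set has constant parity
  apply h₁.2.1
  refine ⟨{t ∈ T₁ | ParAux.par Cf t = ParAux.par Cf a},
    {t ∈ T₁ | ParAux.par Cf t ≠ ParAux.par Cf a}, ⟨a, haT, rfl⟩, ⟨b, hbT₁, fun h => hne h.symm⟩,
    ?_, ?_, ?_⟩
  · ext x
    simp only [Set.mem_union, Set.mem_setOf_eq]
    constructor
    · rintro (⟨h, _⟩ | ⟨h, _⟩) <;> exact h
    · intro h
      by_cases hx : ParAux.par Cf x = ParAux.par Cf a
      · exact Or.inl ⟨h, hx⟩
      · exact Or.inr ⟨h, hx⟩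
  · ext x
    simp only [Set.mem_inter_iff, Set.mem_setOf_eq, Set.mem_empty_iff_false, iff_false]
    rintro ⟨⟨_, h1⟩, ⟨_, h2⟩⟩
    exact h2 h1
  · rintro x ⟨hx, hxp⟩ y ⟨hy, hyp⟩ hadj
    apply hyp
    rw [← ParAux.parStep Cf hdeg x y
      (fun h => (hsub hx) ((hmem x).mp h)) (fun h => (hsub hy) ((hmem y).mp h)) hadj]
    exact hxp
end
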